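/- Let n ≥ 1 and let R(P_n) = u_1, …, u_q be the rooted list of the path P_n. Then (1) the set {u_1, …, u_q} equals the minimal monomial generating set G(J(P_n)) of the cover ideal J(P_n), and (2) J(P_n) has linear quotients with respect to the order u_1, …, u_q, i.e., for every i = 2, …, q the colon ideal (u_1, …, u_{i−1}) : (u_i) is generated by a subset of the variables. -/

import Mathlib

open MvPolynomial

noncomputable section

/-- The cover ideal of the path graph `P_n` on vertices `x_1, …, x_n`:
the intersection of the ideals `(x_i, x_{i+1})` over the edges of the path. -/
def pathCoverIdeal (k : Type*) [Field k] (n : ℕ) : Ideal (MvPolynomial ℕ k) :=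
  ⨅ i ∈ Finset.Icc 1 (n - 1), Ideal.span {(X i : MvPolynomial ℕ k), X (i + 1)}

/-- A monomial with coefficient `1`. -/
def IsMonomial {k : Type*} [Field k] (m : MvPolynomial ℕ k) : Prop :=
  ∃ a : ℕ →₀ ℕ, m = monomial a 1

/-- The minimal monomial generating set `G(I)` of a monomial ideal `I`:
monomials of `I` that are not strictly divisible by another monomial of `I`. -/
def minGens {k : Type*} [Field k] (I : Ideal (MvPolynomial ℕ k)) :
    Set (MvPolynomial ℕ k) :=
  {m | IsMonomial m ∧ m ∈ I ∧ ∀ m', IsMonomial m' → m' ∈ I → m' ∣ m → m' = m}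

/-- The rooted list `R(P_n)` of the path `P_n`. -/
def rootedList (k : Type*) [Field k] : ℕ → List (MvPolynomial ℕ k)
  | 0 => [1]
  | 1 => [1]
  | 2 => [X 1, X 2]
  | 3 => [X 2, X 1 * X 3]
  | (n + 4) =>
      ((rootedList k (n + 2)).map fun u => X (n + 3) * u) ++
      ((rootedList k (n + 1)).map fun u => X (n + 4) * X (n + 2) * u)

/-- `F(I^s)`: the set of `s`-fold products of minimal generators of `I`. -/
def sFold {k : Type*} [Field k] (I : Ideal (MvPolynomial ℕ k)) (s : ℕ) :
    Set (MvPolynomial ℕ k) :=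
  {m | ∃ L : List (MvPolynomial ℕ k), L.length = s ∧ (∀ u ∈ L, u ∈ minGens I) ∧ m = L.prod}

/-- `a >_lex b`: the first entry where `a` and `b` differ is bigger in `a`. -/
def lexGt (a b : ℕ → ℕ) : Prop :=
  ∃ t, (∀ j, j < t → a j = b j) ∧ b t < a t

/-- `a` is an exponent-vector expression of `M` as an `s`-fold product of the terms of
the list `L`. -/
def IsExprOn {k : Type*} [Field k] (L : List (MvPolynomial ℕ k)) (s : ℕ) (a : ℕ → ℕ)
    (M : MvPolynomial ℕ k) : Prop :=
  (∀ i, L.length ≤ i → a i = 0) ∧ (∑ i ∈ Finset.range L.length, a i) = s ∧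
    M = ∏ i ∈ Finset.range L.length, (L.getD i 1) ^ (a i)

/-- `a` is the (lexicographically) maximal expression of `M` as an `s`-fold product of
the terms of the list `L`. -/
def IsMaxExpr {k : Type*} [Field k] (L : List (MvPolynomial ℕ k)) (s : ℕ) (a : ℕ → ℕ)
    (M : MvPolynomial ℕ k) : Prop :=
  IsExprOn L s a M ∧ ∀ b, IsExprOn L s b M → b ≠ a → lexGt a b

/-- The rooted order `M >_R N` on `s`-fold products, relative to the list `L` of
minimal generators: maximal expressions are compared lexicographically. -/
def rootedGt {k : Type*} [Field k] (L : List (MvPolynomial ℕ k)) (s : ℕ)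
    (M N : MvPolynomial ℕ k) : Prop :=
  ∃ a b, IsMaxExpr L s a M ∧ IsMaxExpr L s b N ∧ lexGt a b

/-- An ideal is generated by a subset of the variables. -/
def genByVars {k : Type*} [Field k] (I : Ideal (MvPolynomial ℕ k)) : Prop :=
  ∃ T : Set ℕ, I = Ideal.span ((fun i => (X i : MvPolynomial ℕ k)) '' T)

end



namespace PathAux

/-- `C` covers all edges of the path `P_n`. -/
def coversSet (n : ℕ) (C : Finset ℕ) : Prop :=
  ∀ i, 1 ≤ i → i + 1 ≤ n → i ∈ C ∨ i + 1 ∈ C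

/-- `C` is a minimal vertex cover of `P_n`. -/
def minCovSet (n : ℕ) (C : Finset ℕ) : Prop :=
  C ⊆ Finset.Icc 1 n ∧ coversSet n C ∧ ∀ D ⊆ C, coversSet n D → D = C

/-- The list of minimal vertex covers of `P_n` in the rooted order. -/
def covList : ℕ → List (Finset ℕ)
  | 0 => [∅]
  | 1 => [∅]
  | 2 => [{1}, {2}]
  | 3 => [{2}, {1, 3}]
  | (n + 4) =>
      ((covList (n + 2)).map (insert (n + 3))) ++
      ((covList (n + 1)).map (fun C => insert (n + 4) (insert (n + 2) C)))

lemma covList_subset : ∀ n, ∀ C ∈ covList n, C ⊆ Finset.Icc 1 n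
  | 0 => by intro C hC; simp only [covList, List.mem_singleton] at hC; subst hC; simp
  | 1 => by intro C hC; simp only [covList, List.mem_singleton] at hC; subst hC; simp
  | 2 => by
      intro C hC
      simp only [covList, List.mem_cons, List.not_mem_nil, or_false] at hC
      rcases hC with rfl | rfl <;> decide
  | 3 => by
      intro C hC
      simp only [covList, List.mem_cons, List.not_mem_nil, or_false] at hC
      rcases hC with rfl | rfl <;> decide
  | (n + 4) => by
      intro C hC
      simp only [covList, List.mem_append, List.mem_map] at hC
      rcases hC with ⟨D, hD, rfl⟩ | ⟨D, hD, rfl⟩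
      · have h := covList_subset (n + 2) D hD
        intro x hx
        rcases Finset.mem_insert.1 hx with rfl | hx
        · simp only [Finset.mem_Icc]; omega
        · have := h hx; simp only [Finset.mem_Icc] at this ⊢; omega
      · have h := covList_subset (n + 1) D hD
        intro x hx
        rcases Finset.mem_insert.1 hx with rfl | hx
        · simp only [Finset.mem_Icc]; omega
        · rcases Finset.mem_insert.1 hx with rfl | hx
          · simp only [Finset.mem_Icc]; omega
          · have := h hx; simp only [Finset.mem_Icc] at this ⊢; omega



lemma mem_covList : ∀ n (C : Finset ℕ), C ∈ covList n ↔ minCovSet n C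
  | 0, C => by
    simp only [covList, List.mem_singleton]
    constructor
    · rintro rfl
      exact ⟨by simp, fun i h1 h2 => by omega, fun D hD _ => Finset.subset_empty.1 hD⟩
    · rintro ⟨hsub, -, -⟩
      refine Finset.eq_empty_iff_forall_notMem.2 fun x hx => ?_
      have := hsub hx; simp only [Finset.mem_Icc] at this; omega
  | 1, C => by
    simp only [covList, List.mem_singleton]
    constructor
    · rintro rfl
      exact ⟨by simp, fun i h1 h2 => by omega, fun D hD _ => Finset.subset_empty.1 hD⟩
    · rintro ⟨hsub, hcov, hmin⟩
      exact (hmin ∅ (Finset.empty_subset _) (fun i h1 h2 => by omega)).symm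
  | 2, C => by
    simp only [covList, List.mem_cons, List.not_mem_nil, or_false]
    constructor
    · rintro (rfl | rfl)
      · refine ⟨by decide, fun i h1 h2 => Or.inl (by have h : i = 1 := (by omega); subst h; decide),
          fun D hD hcov => ?_⟩
        have h1 : (1 : ℕ) ∈ D := by
          rcases hcov 1 (by omega) (by omega) with h | h
          · exact h
          · exact absurd (hD h) (by decide)
        exact Finset.Subset.antisymm hD (Finset.singleton_subset_iff.2 h1)
      · refine ⟨by decide, fun i h1 h2 => Or.inr (by have h : i = 1 := (by omega); subst h; decide),
          fun D hD hcov => ?_⟩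
        have h2 : (2 : ℕ) ∈ D := by
          rcases hcov 1 (by omega) (by omega) with h | h
          · exact absurd (hD h) (by decide)
          · exact h
        exact Finset.Subset.antisymm hD (Finset.singleton_subset_iff.2 h2)
    · rintro ⟨hsub, hcov, hmin⟩
      rcases hcov 1 (by omega) (by omega) with h | h
      · exact Or.inl (hmin {1} (Finset.singleton_subset_iff.2 h)
          (fun i h1 h2 => Or.inl (by have h : i = 1 := (by omega); subst h; decide))).symm
      · exact Or.inr (hmin {2} (Finset.singleton_subset_iff.2 h)
          (fun i h1 h2 => Or.inr (by have h : i = 1 := (by omega); subst h; decide))).symm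
  | 3, C => by
    have cov2 : coversSet 3 {2} := fun i h1 h2 => by
      rcases (by omega : i = 1 ∨ i = 2) with rfl | rfl
      · exact Or.inr (by decide)
      · exact Or.inl (by decide)
    have cov13 : coversSet 3 {1, 3} := fun i h1 h2 => by
      rcases (by omega : i = 1 ∨ i = 2) with rfl | rfl
      · exact Or.inl (by decide)
      · exact Or.inr (by decide)
    simp only [covList, List.mem_cons, List.not_mem_nil, or_false]
    constructor
    · rintro (rfl | rfl)
      · refine ⟨by decide, cov2, fun D hD hcov => ?_⟩
        have h2 : (2 : ℕ) ∈ D := by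
          rcases hcov 1 (by omega) (by omega) with h | h
          · exact absurd (hD h) (by decide)
          · exact h
        exact Finset.Subset.antisymm hD (Finset.singleton_subset_iff.2 h2)
      · refine ⟨by decide, cov13, fun D hD hcov => ?_⟩
        have h1 : (1 : ℕ) ∈ D := by
          rcases hcov 1 (by omega) (by omega) with h | h
          · exact h
          · exact absurd (hD h) (by decide)
        have h3 : (3 : ℕ) ∈ D := by
          rcases hcov 2 (by omega) (by omega) with h | h
          · exact absurd (hD h) (by decide)
          · exact h
        exact Finset.Subset.antisymm hD (Finset.insert_subset h1 (Finset.singleton_subset_iff.2 h3))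
    · rintro ⟨hsub, hcov, hmin⟩
      by_cases h2 : (2 : ℕ) ∈ C
      · exact Or.inl (hmin {2} (Finset.singleton_subset_iff.2 h2) cov2).symm
      · have h1 : (1 : ℕ) ∈ C := by
          rcases hcov 1 (by omega) (by omega) with h | h
          · exact h
          · exact absurd h h2
        have h3 : (3 : ℕ) ∈ C := by
          rcases hcov 2 (by omega) (by omega) with h | h
          · exact absurd h h2
          · exact h
        exact Or.inr (hmin {1, 3}
          (Finset.insert_subset h1 (Finset.singleton_subset_iff.2 h3)) cov13).symm
  | (n + 4), C => by
    constructor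
    · intro hC
      simp only [covList, List.mem_append, List.mem_map] at hC
      rcases hC with ⟨D, hD, rfl⟩ | ⟨E, hE, rfl⟩
      · obtain ⟨hDsub, hDcov, hDmin⟩ := (mem_covList (n + 2) D).1 hD
        have hD4 : (n + 4) ∉ D := fun h => by
          have := hDsub h; simp only [Finset.mem_Icc] at this; omega
        refine ⟨?_, ?_, ?_⟩
        · intro x hx
          rcases Finset.mem_insert.1 hx with rfl | hx
          · simp only [Finset.mem_Icc]; omega
          · have := hDsub hx; simp only [Finset.mem_Icc] at this ⊢; omega
        · intro i h1 h2
          rcases Nat.lt_or_ge i (n + 2) with h | h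
          · rcases hDcov i h1 (by omega) with h' | h'
            · exact Or.inl (Finset.mem_insert_of_mem h')
            · exact Or.inr (Finset.mem_insert_of_mem h')
          · rcases (by omega : i = n + 2 ∨ i = n + 3) with rfl | rfl
            · exact Or.inr (Finset.mem_insert_self _ _)
            · exact Or.inl (Finset.mem_insert_self _ _)
        · intro F hF hFcov
          have h3F : (n + 3) ∈ F := by
            rcases hFcov (n + 3) (by omega) (by omega) with h | h
            · exact h
            · exfalso
              rcases Finset.mem_insert.1 (hF h) with h' | h'
              · omega
              · exact hD4 h'
          have hsub' : F.erase (n + 3) ⊆ D := by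
            intro x hx
            have hx1 := Finset.mem_of_mem_erase hx
            have hx2 := Finset.ne_of_mem_erase hx
            rcases Finset.mem_insert.1 (hF hx1) with h' | h'
            · exact absurd h' hx2
            · exact h'
          have hcov' : coversSet (n + 2) (F.erase (n + 3)) := by
            intro i h1 h2
            rcases hFcov i h1 (by omega) with h | h
            · exact Or.inl (Finset.mem_erase.2 ⟨by omega, h⟩)
            · exact Or.inr (Finset.mem_erase.2 ⟨by omega, h⟩)
          have hED := hDmin _ hsub' hcov'
          rw [← hED, Finset.insert_erase h3F]
      · obtain ⟨hEsub, hEcov, hEmin⟩ := (mem_covList (n + 1) E).1 hE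
        have hEb : ∀ x ∈ E, 1 ≤ x ∧ x ≤ n + 1 := fun x hx => by
          have := hEsub hx; simp only [Finset.mem_Icc] at this; exact this
        have hC3 : (n + 3) ∉ insert (n + 4) (insert (n + 2) E) := by
          intro h
          rcases Finset.mem_insert.1 h with h | h
          · omega
          · rcases Finset.mem_insert.1 h with h | h
            · omega
            · have := hEb _ h; omega
        refine ⟨?_, ?_, ?_⟩
        · intro x hx
          rcases Finset.mem_insert.1 hx with rfl | hx
          · simp only [Finset.mem_Icc]; omega
          · rcases Finset.mem_insert.1 hx with rfl | hx
            · simp only [Finset.mem_Icc]; omega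
            · have := hEb _ hx; simp only [Finset.mem_Icc]; omega
        · intro i h1 h2
          rcases Nat.lt_or_ge i (n + 1) with h | h
          · rcases hEcov i h1 (by omega) with h' | h'
            · exact Or.inl (Finset.mem_insert_of_mem (Finset.mem_insert_of_mem h'))
            · exact Or.inr (Finset.mem_insert_of_mem (Finset.mem_insert_of_mem h'))
          · rcases (by omega : i = n + 1 ∨ i = n + 2 ∨ i = n + 3) with rfl | rfl | rfl
            · exact Or.inr (Finset.mem_insert_of_mem (Finset.mem_insert_self _ _))
            · exact Or.inl (Finset.mem_insert_of_mem (Finset.mem_insert_self _ _))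
            · exact Or.inr (Finset.mem_insert_self _ _)
        · intro F hF hFcov
          have h4F : (n + 4) ∈ F := by
            rcases hFcov (n + 3) (by omega) (by omega) with h | h
            · exact absurd (hF h) hC3
            · exact h
          have h2F : (n + 2) ∈ F := by
            rcases hFcov (n + 2) (by omega) (by omega) with h | h
            · exact h
            · exact absurd (hF h) hC3
          have hsub' : (F.erase (n + 4)).erase (n + 2) ⊆ E := by
            intro x hx
            have hx2 := Finset.ne_of_mem_erase hx
            have hx' := Finset.mem_of_mem_erase hx
            have hx4 := Finset.ne_of_mem_erase hx'
            have hxF := Finset.mem_of_mem_erase hx'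
            rcases Finset.mem_insert.1 (hF hxF) with h' | h'
            · exact absurd h' hx4
            · rcases Finset.mem_insert.1 h' with h'' | h''
              · exact absurd h'' hx2
              · exact h''
          have hcov' : coversSet (n + 1) ((F.erase (n + 4)).erase (n + 2)) := by
            intro i h1 h2
            rcases hFcov i h1 (by omega) with h | h
            · exact Or.inl (Finset.mem_erase.2 ⟨by omega, Finset.mem_erase.2 ⟨by omega, h⟩⟩)
            · exact Or.inr (Finset.mem_erase.2 ⟨by omega, Finset.mem_erase.2 ⟨by omega, h⟩⟩)
          have hEF := hEmin _ hsub' hcov'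
          rw [← hEF, Finset.insert_erase (Finset.mem_erase.2 ⟨by omega, h2F⟩),
            Finset.insert_erase h4F]
    · rintro ⟨hsub, hcov, hmin⟩
      have hCb : ∀ x ∈ C, 1 ≤ x ∧ x ≤ n + 4 := fun x hx => by
        have := hsub hx; simp only [Finset.mem_Icc] at this; exact this
      simp only [covList, List.mem_append, List.mem_map]
      by_cases h4 : (n + 4) ∈ C
      · right
        have h3 : (n + 3) ∉ C := by
          intro h3
          have hDcov : coversSet (n + 4) (C.erase (n + 4)) := by
            intro i h1 h2
            rcases Nat.lt_or_ge i (n + 3) with h | h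
            · rcases hcov i h1 h2 with h' | h'
              · exact Or.inl (Finset.mem_erase.2 ⟨by omega, h'⟩)
              · exact Or.inr (Finset.mem_erase.2 ⟨by omega, h'⟩)
            · have hi : i = n + 3 := by omega
              subst hi
              exact Or.inl (Finset.mem_erase.2 ⟨by omega, h3⟩)
          have heq := hmin _ (Finset.erase_subset _ _) hDcov
          have hne := Finset.notMem_erase (n + 4) C
          rw [heq] at hne
          exact hne h4
        have h2 : (n + 2) ∈ C := by
          rcases hcov (n + 2) (by omega) (by omega) with h | h
          · exact h
          · exact absurd h h3
        have hEsub : (C.erase (n + 4)).erase (n + 2) ⊆ Finset.Icc 1 (n + 1) := by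
          intro x hx
          have hx2 := Finset.ne_of_mem_erase hx
          have hx' := Finset.mem_of_mem_erase hx
          have hx4 := Finset.ne_of_mem_erase hx'
          have hxC := Finset.mem_of_mem_erase hx'
          have hx3 : x ≠ n + 3 := fun h => h3 (h ▸ hxC)
          have := hCb _ hxC
          simp only [Finset.mem_Icc]; omega
        have hEcov : coversSet (n + 1) ((C.erase (n + 4)).erase (n + 2)) := by
          intro i h1 h2
          rcases hcov i h1 (by omega) with h | h
          · exact Or.inl (Finset.mem_erase.2 ⟨by omega, Finset.mem_erase.2 ⟨by omega, h⟩⟩)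
          · exact Or.inr (Finset.mem_erase.2 ⟨by omega, Finset.mem_erase.2 ⟨by omega, h⟩⟩)
        have hEmin : ∀ F ⊆ (C.erase (n + 4)).erase (n + 2), coversSet (n + 1) F →
            F = (C.erase (n + 4)).erase (n + 2) := by
          intro F hF hFcov
          have hFn4 : (n + 4) ∉ F := fun h => by
            have h' := hF h
            exact absurd (Finset.mem_of_mem_erase h') (Finset.notMem_erase _ _)
          have hFn2 : (n + 2) ∉ F := fun h => absurd (hF h) (Finset.notMem_erase _ _)
          have hGcov : coversSet (n + 4) (insert (n + 4) (insert (n + 2) F)) := by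
            intro i h1 h2
            rcases Nat.lt_or_ge i (n + 1) with h | h
            · rcases hFcov i h1 (by omega) with h' | h'
              · exact Or.inl (Finset.mem_insert_of_mem (Finset.mem_insert_of_mem h'))
              · exact Or.inr (Finset.mem_insert_of_mem (Finset.mem_insert_of_mem h'))
            · rcases (by omega : i = n + 1 ∨ i = n + 2 ∨ i = n + 3) with rfl | rfl | rfl
              · exact Or.inr (Finset.mem_insert_of_mem (Finset.mem_insert_self _ _))
              · exact Or.inl (Finset.mem_insert_of_mem (Finset.mem_insert_self _ _))
              · exact Or.inr (Finset.mem_insert_self _ _)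
          have hGsub : insert (n + 4) (insert (n + 2) F) ⊆ C :=
            Finset.insert_subset h4 (Finset.insert_subset h2
              (hF.trans ((Finset.erase_subset _ _).trans (Finset.erase_subset _ _))))
          have hG := hmin _ hGsub hGcov
          have h4' : (n + 4) ∉ insert (n + 2) F := by
            intro h
            rcases Finset.mem_insert.1 h with h | h
            · omega
            · exact hFn4 h
          calc F = (((insert (n + 4) (insert (n + 2) F)).erase (n + 4)).erase (n + 2)) := by
                rw [Finset.erase_insert h4', Finset.erase_insert hFn2]
            _ = (C.erase (n + 4)).erase (n + 2) := by rw [hG]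
        refine ⟨(C.erase (n + 4)).erase (n + 2),
          (mem_covList (n + 1) _).2 ⟨hEsub, hEcov, hEmin⟩, ?_⟩
        rw [Finset.insert_erase (Finset.mem_erase.2 ⟨by omega, h2⟩), Finset.insert_erase h4]
      · left
        have h3 : (n + 3) ∈ C := by
          rcases hcov (n + 3) (by omega) (by omega) with h | h
          · exact h
          · exact absurd h h4
        have hDsub : C.erase (n + 3) ⊆ Finset.Icc 1 (n + 2) := by
          intro x hx
          have hx3 := Finset.ne_of_mem_erase hx
          have hxC := Finset.mem_of_mem_erase hx
          have hx4 : x ≠ n + 4 := fun h => h4 (h ▸ hxC)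
          have := hCb _ hxC
          simp only [Finset.mem_Icc]; omega
        have hDcov : coversSet (n + 2) (C.erase (n + 3)) := by
          intro i h1 h2
          rcases hcov i h1 (by omega) with h | h
          · exact Or.inl (Finset.mem_erase.2 ⟨by omega, h⟩)
          · exact Or.inr (Finset.mem_erase.2 ⟨by omega, h⟩)
        have hDmin : ∀ F ⊆ C.erase (n + 3), coversSet (n + 2) F → F = C.erase (n + 3) := by
          intro F hF hFcov
          have hFn3 : (n + 3) ∉ F := fun h => absurd (hF h) (Finset.notMem_erase _ _)
          have hGcov : coversSet (n + 4) (insert (n + 3) F) := by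
            intro i h1 h2
            rcases Nat.lt_or_ge i (n + 2) with h | h
            · rcases hFcov i h1 (by omega) with h' | h'
              · exact Or.inl (Finset.mem_insert_of_mem h')
              · exact Or.inr (Finset.mem_insert_of_mem h')
            · rcases (by omega : i = n + 2 ∨ i = n + 3) with rfl | rfl
              · exact Or.inr (Finset.mem_insert_self _ _)
              · exact Or.inl (Finset.mem_insert_self _ _)
          have hG := hmin _ (Finset.insert_subset h3 (hF.trans (Finset.erase_subset _ _))) hGcov
          calc F = (insert (n + 3) F).erase (n + 3) := (Finset.erase_insert hFn3).symm
            _ = C.erase (n + 3) := by rw [hG]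
        exact ⟨C.erase (n + 3), (mem_covList (n + 2) _).2 ⟨hDsub, hDcov, hDmin⟩,
          Finset.insert_erase h3⟩



lemma exists_min_subset (n : ℕ) (D : Finset ℕ) (hsub : D ⊆ Finset.Icc 1 n)
    (hcov : coversSet n D) : ∃ C ⊆ D, minCovSet n C := by
  induction D using Finset.strongInduction with
  | _ D ih =>
    by_cases h : ∀ E ⊆ D, coversSet n E → E = D
    · exact ⟨D, Finset.Subset.refl _, hsub, hcov, h⟩
    · push_neg at h
      obtain ⟨E, hE, hEcov, hne⟩ := h
      obtain ⟨C, hC, hCmin⟩ := ih E (Finset.ssubset_iff_subset_ne.2 ⟨hE, hne⟩)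
        (hE.trans hsub) hEcov
      exact ⟨C, hC.trans hE, hCmin⟩


lemma getD_map' {α β : Type*} (f : α → β) (L : List α) (m : ℕ) (h : m < L.length)
    (d : β) (d' : α) : (L.map f).getD m d = f (L.getD m d') := by
  rw [List.getD_eq_getElem _ _ (by simpa using h), List.getD_eq_getElem _ _ h, List.getElem_map]

lemma getD_mem' {α : Type*} (L : List α) (m : ℕ) (h : m < L.length) (d : α) :
    L.getD m d ∈ L := by
  rw [List.getD_eq_getElem _ _ h]
  exact List.getElem_mem h

lemma covList_lq : ∀ n, ∀ i j : ℕ, j < i → i < (covList n).length →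
    ∃ t, t ∈ (covList n).getD j ∅ ∧ t ∉ (covList n).getD i ∅ ∧
      ∃ j', j' < i ∧ (covList n).getD j' ∅ ⊆ insert t ((covList n).getD i ∅)
  | 0 => by
      intro i j hj hi
      have hlen : (covList 0).length = 1 := by simp [covList]
      omega
  | 1 => by
      intro i j hj hi
      have hlen : (covList 1).length = 1 := by simp [covList]
      omega
  | 2 => by
      intro i j hj hi
      have hlen : (covList 2).length = 2 := by simp [covList]
      have h0 : (covList 2).getD 0 ∅ = {1} := by simp [covList]
      have h1 : (covList 2).getD 1 ∅ = {2} := by simp [covList]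
      have hi1 : i = 1 := by omega
      have hj0 : j = 0 := by omega
      subst hi1; subst hj0
      rw [h0, h1]
      exact ⟨1, by decide, by decide, 0, by omega, by rw [h0]; decide⟩
  | 3 => by
      intro i j hj hi
      have hlen : (covList 3).length = 2 := by simp [covList]
      have h0 : (covList 3).getD 0 ∅ = {2} := by simp [covList]
      have h1 : (covList 3).getD 1 ∅ = {1, 3} := by simp [covList]
      have hi1 : i = 1 := by omega
      have hj0 : j = 0 := by omega
      subst hi1; subst hj0
      rw [h0, h1]
      exact ⟨2, by decide, by decide, 0, by omega, by rw [h0]; decide⟩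
  | (n + 4) => by
    intro i j hj hi
    have e4 : covList (n + 4) = (covList (n + 2)).map (insert (n + 3)) ++
        (covList (n + 1)).map (fun C => insert (n + 4) (insert (n + 2) C)) := rfl
    have hlen : (covList (n + 4)).length =
        (covList (n + 2)).length + (covList (n + 1)).length := by
      rw [e4, List.length_append, List.length_map, List.length_map]
    set p := (covList (n + 2)).length with hp
    have hgetA : ∀ m, m < p → (covList (n + 4)).getD m ∅ =
        insert (n + 3) ((covList (n + 2)).getD m ∅) := by
      intro m hm
      rw [e4, List.getD_append _ _ _ _ (by rw [List.length_map]; exact hm)]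
      exact getD_map' _ _ _ hm _ ∅
    have hgetB : ∀ m, p ≤ m → m < (covList (n + 4)).length →
        (covList (n + 4)).getD m ∅ =
          insert (n + 4) (insert (n + 2) ((covList (n + 1)).getD (m - p) ∅)) := by
      intro m hm hm'
      rw [e4, List.getD_append_right _ _ _ _ (by rw [List.length_map]; exact hm),
        List.length_map]
      exact getD_map' _ _ _ (by omega) _ ∅
    rcases Nat.lt_or_ge i p with hiA | hiB
    · obtain ⟨t, ht1, ht2, j', hj', hsubJ⟩ := covList_lq (n + 2) i j hj hiA
      have htb := covList_subset (n + 2) _ (getD_mem' _ j (by omega) ∅) ht1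
      rw [Finset.mem_Icc] at htb
      refine ⟨t, ?_, ?_, j', hj', ?_⟩
      · rw [hgetA j (by omega)]; exact Finset.mem_insert_of_mem ht1
      · rw [hgetA i hiA]
        intro h
        rcases Finset.mem_insert.1 h with rfl | h
        · omega
        · exact ht2 h
      · rw [hgetA j' (by omega), hgetA i hiA]
        intro x hx
        rcases Finset.mem_insert.1 hx with rfl | hx
        · exact Finset.mem_insert_of_mem (Finset.mem_insert_self _ _)
        · rcases Finset.mem_insert.1 (hsubJ hx) with rfl | hx2
          · exact Finset.mem_insert_self _ _
          · exact Finset.mem_insert_of_mem (Finset.mem_insert_of_mem hx2)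
    · rcases Nat.lt_or_ge j p with hjA | hjB
      · -- cross case
        have hiE : i - p < (covList (n + 1)).length := by omega
        have hEmem : (covList (n + 1)).getD (i - p) ∅ ∈ covList (n + 1) :=
          getD_mem' _ _ hiE ∅
        set E := (covList (n + 1)).getD (i - p) ∅ with hEdef
        obtain ⟨hEsub, hEcov, -⟩ := (mem_covList (n + 1) E).1 hEmem
        have hEb : ∀ x ∈ E, 1 ≤ x ∧ x ≤ n + 1 := fun x hx => by
          have := hEsub hx; simpa [Finset.mem_Icc] using this
        have hcov2 : coversSet (n + 2) (insert (n + 2) E) := by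
          intro i' h1 h2
          rcases Nat.lt_or_ge i' (n + 1) with h | h
          · rcases hEcov i' h1 (by omega) with h' | h'
            · exact Or.inl (Finset.mem_insert_of_mem h')
            · exact Or.inr (Finset.mem_insert_of_mem h')
          · have hi' : i' = n + 1 := by omega
            subst hi'
            exact Or.inr (Finset.mem_insert_self _ _)
        have hsub2 : insert (n + 2) E ⊆ Finset.Icc 1 (n + 2) := by
          intro x hx
          rcases Finset.mem_insert.1 hx with rfl | hx
          · simp only [Finset.mem_Icc]; omega
          · have := hEb _ hx; simp only [Finset.mem_Icc]; omega
        obtain ⟨C', hC'sub, hC'min⟩ := exists_min_subset (n + 2) _ hsub2 hcov2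
        have hC'mem : C' ∈ covList (n + 2) := (mem_covList (n + 2) C').2 hC'min
        obtain ⟨j'', hj''lt, hj''⟩ := List.mem_iff_getElem.1 hC'mem
        have egd : (covList (n + 2)).getD j'' ∅ = C' := by
          rw [List.getD_eq_getElem _ _ hj''lt]; exact hj''
        refine ⟨n + 3, ?_, ?_, j'', by omega, ?_⟩
        · rw [hgetA j hjA]; exact Finset.mem_insert_self _ _
        · rw [hgetB i hiB (by omega)]
          intro h
          rcases Finset.mem_insert.1 h with h | h
          · omega
          · rcases Finset.mem_insert.1 h with h | h
            · omega
            · have := hEb _ h; omega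
        · rw [hgetA j'' (by omega), hgetB i hiB (by omega), egd]
          intro x hx
          rcases Finset.mem_insert.1 hx with rfl | hx
          · exact Finset.mem_insert_self _ _
          · rcases Finset.mem_insert.1 (hC'sub hx) with rfl | hx2
            · exact Finset.mem_insert_of_mem
                (Finset.mem_insert_of_mem (Finset.mem_insert_self _ _))
            · exact Finset.mem_insert_of_mem
                (Finset.mem_insert_of_mem (Finset.mem_insert_of_mem hx2))
      · -- both in the second half
        obtain ⟨t, ht1, ht2, j', hj', hsubJ⟩ :=
          covList_lq (n + 1) (i - p) (j - p) (by omega) (by omega)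
        have htb := covList_subset (n + 1) _ (getD_mem' _ (j - p) (by omega) ∅) ht1
        rw [Finset.mem_Icc] at htb
        refine ⟨t, ?_, ?_, p + j', by omega, ?_⟩
        · rw [hgetB j hjB (by omega)]
          exact Finset.mem_insert_of_mem (Finset.mem_insert_of_mem ht1)
        · rw [hgetB i hiB (by omega)]
          intro h
          rcases Finset.mem_insert.1 h with rfl | h
          · omega
          · rcases Finset.mem_insert.1 h with rfl | h
            · omega
            · exact ht2 h
        · rw [hgetB (p + j') (by omega) (by omega), hgetB i hiB (by omega),
            show p + j' - p = j' from by omega]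
          intro x hx
          rcases Finset.mem_insert.1 hx with rfl | hx
          · exact Finset.mem_insert_of_mem (Finset.mem_insert_self _ _)
          · rcases Finset.mem_insert.1 hx with rfl | hx
            · exact Finset.mem_insert_of_mem
                (Finset.mem_insert_of_mem (Finset.mem_insert_self _ _))
            · rcases Finset.mem_insert.1 (hsubJ hx) with rfl | hx2
              · exact Finset.mem_insert_self _ _
              · exact Finset.mem_insert_of_mem
                  (Finset.mem_insert_of_mem (Finset.mem_insert_of_mem hx2))





/-- The 0/1 exponent vector with support `C`. -/
noncomputable def indic (C : Finset ℕ) : ℕ →₀ ℕ := ∑ i ∈ C, Finsupp.single i 1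

lemma indic_apply (C : Finset ℕ) (j : ℕ) : indic C j = if j ∈ C then 1 else 0 := by
  classical
  rw [indic, Finsupp.finset_sum_apply]
  rw [Finset.sum_congr rfl (fun i _ => Finsupp.single_apply)]
  exact Finset.sum_ite_eq' C j (fun _ => 1)

lemma indic_apply_ne (C : Finset ℕ) (j : ℕ) : indic C j ≠ 0 ↔ j ∈ C := by
  rw [indic_apply]; split <;> simp_all

lemma indic_le_indic_iff {C D : Finset ℕ} : indic C ≤ indic D ↔ C ⊆ D := by
  constructor
  · intro h x hx
    have := (Finsupp.le_def.1 h) x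
    rw [indic_apply, indic_apply, if_pos hx] at this
    by_contra hm
    rw [if_neg hm] at this
    omega
  · intro h
    refine Finsupp.le_def.2 fun x => ?_
    rw [indic_apply, indic_apply]
    by_cases hx : x ∈ C
    · rw [if_pos hx, if_pos (h hx)]
    · rw [if_neg hx]; omega

lemma indic_injective : Function.Injective indic := fun C D h => by
  apply Finset.Subset.antisymm
  · exact indic_le_indic_iff.1 h.le
  · exact indic_le_indic_iff.1 h.ge

lemma le_indic_iff {b : ℕ →₀ ℕ} {C : Finset ℕ} : b ≤ indic C ↔ ∃ D ⊆ C, b = indic D := by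
  constructor
  · intro h
    refine ⟨b.support, ?_, ?_⟩
    · intro x hx
      have hb := Finsupp.mem_support_iff.1 hx
      have := (Finsupp.le_def.1 h) x
      rw [indic_apply] at this
      by_contra hm
      rw [if_neg hm] at this
      omega
    · ext x
      rw [indic_apply]
      by_cases hx : x ∈ b.support
      · rw [if_pos hx]
        have hb := Finsupp.mem_support_iff.1 hx
        have := (Finsupp.le_def.1 h) x
        rw [indic_apply] at this
        split_ifs at this with h'
        · omega
        · omega
      · rw [if_neg hx]
        exact Finsupp.notMem_support_iff.1 hx
  · rintro ⟨D, hD, rfl⟩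
    exact indic_le_indic_iff.2 hD

lemma indic_le_add_single {C B : Finset ℕ} {t : ℕ} :
    indic C ≤ indic B + Finsupp.single t 1 ↔ C ⊆ insert t B := by
  constructor
  · intro h x hx
    have hle := (Finsupp.le_def.1 h) x
    rw [indic_apply, Finsupp.add_apply, indic_apply, Finsupp.single_apply, if_pos hx] at hle
    by_contra hmem
    rw [Finset.mem_insert, not_or] at hmem
    rw [if_neg hmem.2, if_neg (fun h' : t = x => hmem.1 h'.symm)] at hle
    omega
  · intro h
    refine Finsupp.le_def.2 fun x => ?_
    rw [indic_apply, Finsupp.add_apply, indic_apply, Finsupp.single_apply]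
    split_ifs with h1 h2 h3 <;>
      first
        | omega
        | (rcases Finset.mem_insert.1 (h h1) with h' | h' <;> simp_all)

lemma indic_insert {t : ℕ} {C : Finset ℕ} (h : t ∉ C) :
    indic (insert t C) = Finsupp.single t 1 + indic C := by
  rw [indic, Finset.sum_insert h]; rfl

lemma indic_empty : indic ∅ = 0 := by simp [indic]

lemma indic_singleton (i : ℕ) : indic {i} = Finsupp.single i 1 := by simp [indic]

lemma single_le_of_ne_zero {m : ℕ →₀ ℕ} {t : ℕ} (h : m t ≠ 0) : Finsupp.single t 1 ≤ m :=
  Finsupp.single_le_iff.2 (by omega)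



end PathAux

namespace PathAux
end PathAux
section
open PathAux




namespace PathAux

lemma X_as_monomial {k : Type*} [Field k] (i : ℕ) :
    (X i : MvPolynomial ℕ k) = monomial (Finsupp.single i 1) 1 := rfl

lemma rootedList_eq (k : Type*) [Field k] :
    ∀ n, rootedList k n = (covList n).map (fun C => monomial (indic C) (1 : k))
  | 0 => by
      simp only [rootedList, covList, List.map_cons, List.map_nil, indic_empty]
      rw [monomial_zero', C_1]
  | 1 => by
      simp only [rootedList, covList, List.map_cons, List.map_nil, indic_empty]
      rw [monomial_zero', C_1]
  | 2 => by
      simp only [rootedList, covList, List.map_cons, List.map_nil, indic_singleton]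
      rfl
  | 3 => by
      have h13 : indic {1, 3} = Finsupp.single 1 1 + Finsupp.single 3 1 := by
        rw [indic_insert (by decide), indic_singleton]
      simp only [rootedList, covList, List.map_cons, List.map_nil, indic_singleton, h13]
      rw [X_as_monomial, X_as_monomial, X_as_monomial, monomial_mul, one_mul]
  | (n + 4) => by
      have e1 : rootedList k (n + 4) =
          ((rootedList k (n + 2)).map fun u => X (n + 3) * u) ++
          ((rootedList k (n + 1)).map fun u => X (n + 4) * X (n + 2) * u) := rfl
      have e2 : covList (n + 4) = ((covList (n + 2)).map (insert (n + 3))) ++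
          ((covList (n + 1)).map (fun C => insert (n + 4) (insert (n + 2) C))) := rfl
      rw [e1, e2, rootedList_eq k (n + 2), rootedList_eq k (n + 1), List.map_append,
        List.map_map, List.map_map, List.map_map, List.map_map]
      congr 1
      · apply List.map_congr_left
        intro C hC
        have hn3 : (n + 3) ∉ C := fun h => by
          have := covList_subset (n + 2) C hC h
          simp only [Finset.mem_Icc] at this; omega
        simp only [Function.comp_apply]
        rw [indic_insert hn3, X_as_monomial, monomial_mul, one_mul]
      · apply List.map_congr_left
        intro C hC
        have hn2 : (n + 2) ∉ C := fun h => by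
          have := covList_subset (n + 1) C hC h
          simp only [Finset.mem_Icc] at this; omega
        have hn4 : (n + 4) ∉ insert (n + 2) C := fun h => by
          rcases Finset.mem_insert.1 h with h | h
          · omega
          · have := covList_subset (n + 1) C hC h
            simp only [Finset.mem_Icc] at this; omega
        simp only [Function.comp_apply]
        rw [indic_insert hn4, indic_insert hn2, X_as_monomial, X_as_monomial,
          monomial_mul, monomial_mul, add_assoc]
        norm_num

lemma mem_edge_span_iff {k : Type*} [Field k] {f : MvPolynomial ℕ k} {i : ℕ} :
    f ∈ Ideal.span {(X i : MvPolynomial ℕ k), X (i + 1)} ↔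
      ∀ m ∈ f.support, m i ≠ 0 ∨ m (i + 1) ≠ 0 := by
  rw [show ({(X i : MvPolynomial ℕ k), X (i + 1)} : Set _) =
      X '' {i, i + 1} from (Set.image_pair _ _ _).symm,
    mem_ideal_span_X_image]
  apply forall₂_congr
  intro m _
  simp

lemma mem_pathCoverIdeal_iff {k : Type*} [Field k] {n : ℕ} {f : MvPolynomial ℕ k} :
    f ∈ pathCoverIdeal k n ↔
      ∀ m ∈ f.support, ∀ i, 1 ≤ i → i + 1 ≤ n → m i ≠ 0 ∨ m (i + 1) ≠ 0 := by
  rw [pathCoverIdeal]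
  constructor
  · intro h m hm i h1 h2
    have h' := Ideal.mem_iInf.1 h i
    have h'' := Ideal.mem_iInf.1 h' (by simp only [Finset.mem_Icc]; omega)
    exact (mem_edge_span_iff.1 h'') m hm
  · intro h
    rw [Ideal.mem_iInf]
    intro i
    rw [Ideal.mem_iInf]
    intro hi
    rw [mem_edge_span_iff]
    intro m hm
    simp only [Finset.mem_Icc] at hi
    exact h m hm i hi.1 (by omega)

lemma monomial_mem_pathCoverIdeal_iff {k : Type*} [Field k] {n : ℕ} {a : ℕ →₀ ℕ} :
    (monomial a (1 : k)) ∈ pathCoverIdeal k n ↔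
      ∀ i, 1 ≤ i → i + 1 ≤ n → a i ≠ 0 ∨ a (i + 1) ≠ 0 := by
  classical
  rw [mem_pathCoverIdeal_iff, support_monomial, if_neg (one_ne_zero)]
  simp

lemma mem_minGens_iff {k : Type*} [Field k] {n : ℕ} {u : MvPolynomial ℕ k} :
    u ∈ minGens (pathCoverIdeal k n) ↔
      ∃ C : Finset ℕ, minCovSet n C ∧ u = monomial (indic C) 1 := by
  constructor
  · rintro ⟨⟨a, rfl⟩, hmem, hmin⟩
    rw [monomial_mem_pathCoverIdeal_iff] at hmem
    set C := a.support ∩ Finset.Icc 1 n with hC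
    have hle : indic C ≤ a := by
      refine Finsupp.le_def.2 fun x => ?_
      rw [indic_apply]
      split_ifs with h
      · have := Finsupp.mem_support_iff.1 (Finset.mem_inter.1 h).1
        omega
      · omega
    have hcovC : ∀ i, 1 ≤ i → i + 1 ≤ n → indic C i ≠ 0 ∨ indic C (i + 1) ≠ 0 := by
      intro i h1 h2
      rcases hmem i h1 h2 with h | h
      · exact Or.inl ((indic_apply_ne C i).2 (Finset.mem_inter.2
          ⟨Finsupp.mem_support_iff.2 h, by simp only [Finset.mem_Icc]; omega⟩))
      · exact Or.inr ((indic_apply_ne C (i + 1)).2 (Finset.mem_inter.2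
          ⟨Finsupp.mem_support_iff.2 h, by simp only [Finset.mem_Icc]; omega⟩))
    have heq : monomial (indic C) (1 : k) = monomial a 1 := by
      apply hmin
      · exact ⟨indic C, rfl⟩
      · rw [monomial_mem_pathCoverIdeal_iff]; exact hcovC
      · rw [monomial_dvd_monomial]
        exact ⟨Or.inr hle, dvd_refl 1⟩
    have ha : indic C = a := monomial_left_injective one_ne_zero heq
    refine ⟨C, ⟨Finset.inter_subset_right, ?_, ?_⟩, by rw [← ha]⟩
    · intro i h1 h2
      rcases hcovC i h1 h2 with h | h
      · exact Or.inl ((indic_apply_ne C i).1 h)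
      · exact Or.inr ((indic_apply_ne C (i + 1)).1 h)
    · intro D hD hDcov
      have hDeq : monomial (indic D) (1 : k) = monomial a 1 := by
        apply hmin
        · exact ⟨_, rfl⟩
        · rw [monomial_mem_pathCoverIdeal_iff]
          intro i h1 h2
          rcases hDcov i h1 h2 with h | h
          · exact Or.inl ((indic_apply_ne D i).2 h)
          · exact Or.inr ((indic_apply_ne D (i + 1)).2 h)
        · rw [monomial_dvd_monomial]
          exact ⟨Or.inr (le_trans (indic_le_indic_iff.2 hD) hle), dvd_refl 1⟩
      have hDa : indic D = a := monomial_left_injective one_ne_zero hDeq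
      exact indic_injective (by rw [hDa, ← ha])
  · rintro ⟨C, ⟨hsub, hcov, hminC⟩, rfl⟩
    refine ⟨⟨_, rfl⟩, ?_, ?_⟩
    · rw [monomial_mem_pathCoverIdeal_iff]
      intro i h1 h2
      rcases hcov i h1 h2 with h | h
      · exact Or.inl ((indic_apply_ne C i).2 h)
      · exact Or.inr ((indic_apply_ne C (i + 1)).2 h)
    · rintro m' ⟨b, rfl⟩ hbmem hbdvd
      rw [monomial_dvd_monomial] at hbdvd
      have hble : b ≤ indic C := by
        rcases hbdvd.1 with h | h
        · exact absurd h one_ne_zero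
        · exact h
      obtain ⟨D, hD, rfl⟩ := le_indic_iff.1 hble
      rw [monomial_mem_pathCoverIdeal_iff] at hbmem
      have hDC : D = C := hminC D hD (fun i h1 h2 => by
        rcases hbmem i h1 h2 with h | h
        · exact Or.inl ((indic_apply_ne D i).1 h)
        · exact Or.inr ((indic_apply_ne D (i + 1)).1 h))
      rw [hDC]

lemma mem_support_mul_monomial {k : Type*} [Field k] {f : MvPolynomial ℕ k} {b m : ℕ →₀ ℕ} :
    m ∈ (f * monomial b (1 : k)).support ↔ ∃ m' ∈ f.support, m = m' + b := by
  rw [MvPolynomial.mem_support_iff, coeff_mul_monomial']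
  constructor
  · intro h
    split_ifs at h with hle
    · exact ⟨m - b, by rw [MvPolynomial.mem_support_iff]; simpa using h,
        (tsub_add_cancel_of_le hle).symm⟩
    · exact absurd rfl h
  · rintro ⟨m', hm', rfl⟩
    rw [if_pos le_add_self, add_tsub_cancel_right]
    simpa using MvPolynomial.mem_support_iff.1 hm'

lemma mem_take_getD {α : Type*} (L : List α) (i : ℕ) (x d : α) :
    x ∈ L.take i ↔ ∃ j, j < i ∧ j < L.length ∧ L.getD j d = x := by
  constructor
  · intro hx
    obtain ⟨j, hj, hx'⟩ := List.mem_iff_getElem.1 hx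
    have hj' : j < i ∧ j < L.length := by
      have := hj
      rw [List.length_take] at this
      omega
    refine ⟨j, hj'.1, hj'.2, ?_⟩
    rw [List.getD_eq_getElem _ _ hj'.2, ← hx', List.getElem_take]
  · rintro ⟨j, hji, hjL, rfl⟩
    rw [List.getD_eq_getElem _ _ hjL, List.getElem_take' hjL hji]
    exact List.getElem_mem _

end PathAux




lemma PathAux.mem_colon_span_singleton {k : Type*} [Field k]
    (I : Ideal (MvPolynomial ℕ k)) (u f : MvPolynomial ℕ k) :
    f ∈ Submodule.colon I (Ideal.span {u}) ↔ f * u ∈ I := by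
  rw [Submodule.mem_colon]
  constructor
  · intro h; simpa [smul_eq_mul] using h u (Ideal.subset_span (Set.mem_singleton u))
  · intro h s hs
    obtain ⟨c, rfl⟩ := Ideal.mem_span_singleton'.1 hs
    rw [smul_eq_mul, ← mul_assoc, mul_comm f c, mul_assoc]; exact I.mul_mem_left c h

theorem rootedList_eq_minGens_and_linearQuotients (k : Type*) [Field k]
    (n : ℕ) (hn : 1 ≤ n) :
    {u | u ∈ rootedList k n} = minGens (pathCoverIdeal k n) ∧
    ∀ i, 0 < i → i < (rootedList k n).length →
      genByVars (Submodule.colon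
        (Ideal.span {x | x ∈ (rootedList k n).take i})
        (Ideal.span {(rootedList k n).getD i 1})) := by
  constructor
  · ext u
    simp only [Set.mem_setOf_eq]
    rw [PathAux.rootedList_eq k n, List.mem_map, PathAux.mem_minGens_iff]
    constructor
    · rintro ⟨C, hC, rfl⟩
      exact ⟨C, (PathAux.mem_covList n C).1 hC, rfl⟩
    · rintro ⟨C, hC, rfl⟩
      exact ⟨C, (PathAux.mem_covList n C).2 hC, rfl⟩
  · intro i hi0 hilen
    rw [PathAux.rootedList_eq k n] at hilen ⊢
    rw [List.length_map] at hilen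
    set L := PathAux.covList n with hL
    set B := L.getD i ∅ with hB
    have hgetD : (L.map (fun C => monomial (PathAux.indic C) (1 : k))).getD i 1
        = monomial (PathAux.indic B) 1 := PathAux.getD_map' _ _ _ hilen _ ∅
    have hset : {x | x ∈ (L.take i).map (fun C => monomial (PathAux.indic C) (1 : k))}
        = (fun a => monomial a (1 : k)) '' (PathAux.indic '' {C | C ∈ L.take i}) := by
      ext x
      simp only [Set.mem_setOf_eq, List.mem_map, Set.mem_image]
      constructor
      · rintro ⟨a, ha, rfl⟩
        exact ⟨_, ⟨a, ha, rfl⟩, rfl⟩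
      · rintro ⟨b, ⟨a, ha, rfl⟩, rfl⟩
        exact ⟨a, ha, rfl⟩
    rw [hgetD, ← List.map_take, hset]
    refine ⟨{t | t ∉ B ∧ ∃ j', j' < i ∧ L.getD j' ∅ ⊆ insert t B}, ?_⟩
    ext f
    rw [PathAux.mem_colon_span_singleton, mem_ideal_span_monomial_image,
      mem_ideal_span_X_image]
    constructor
    · intro h m hm
      obtain ⟨si, hsi, hle⟩ := h (m + PathAux.indic B)
        (PathAux.mem_support_mul_monomial.2 ⟨m, hm, rfl⟩)
      obtain ⟨C, hC, rfl⟩ := hsi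
      obtain ⟨j, hji, hjL, hgd⟩ := (PathAux.mem_take_getD L i C ∅).1 hC
      obtain ⟨t, ht1, ht2, j', hj', hsubJ⟩ := PathAux.covList_lq n i j hji hilen
      refine ⟨t, ⟨ht2, j', hj', hsubJ⟩, ?_⟩
      have htC : t ∈ C := hgd ▸ ht1
      have hte := Finsupp.le_def.1 hle t
      rw [PathAux.indic_apply, if_pos htC, Finsupp.add_apply,
        PathAux.indic_apply, if_neg ht2] at hte
      omega
    · intro h m hm
      obtain ⟨m', hm', rfl⟩ := PathAux.mem_support_mul_monomial.1 hm
      obtain ⟨t, ⟨htB, j', hj', hsubJ⟩, hmt⟩ := h m' hm'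
      refine ⟨PathAux.indic (L.getD j' ∅),
        ⟨L.getD j' ∅, (PathAux.mem_take_getD L i _ ∅).2 ⟨j', hj', by omega, rfl⟩, rfl⟩, ?_⟩
      calc PathAux.indic (L.getD j' ∅) ≤ PathAux.indic B + Finsupp.single t 1 :=
            PathAux.indic_le_add_single.2 hsubJ
        _ ≤ PathAux.indic B + m' := add_le_add le_rfl (PathAux.single_le_of_ne_zero hmt)
        _ = m' + PathAux.indic B := add_comm _ _

end
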